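/- Let K be a compact linearly ordered topological space, X a Hausdorff space, and f : K → X a continuous order-light surjection. Then for every k ∈ K, the character of K at k is at most the character of X at f(k), i.e. χ(k, K) ≤ χ(f(k), X). -/
import Mathlib


universe u

open Set Topology

/-- The character of a space `X` at a point `x`: the least cardinality of a
neighborhood base of `X` at `x`. -/
noncomputable def nhdsChar (X : Type u) [TopologicalSpace X] (x : X) : Cardinal.{u} :=
  sInf { c | ∃ B : Set (Set X), Cardinal.mk B = c ∧ (∀ U ∈ B, U ∈ nhds x) ∧
      ∀ V ∈ nhds x, ∃ U ∈ B, U ⊆ V }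

/-- The character of a space: `χ(X) = sup_{x ∈ X} χ(x, X)`. -/
noncomputable def spaceChar (X : Type u) [TopologicalSpace X] : Cardinal.{u} :=
  ⨆ x : X, nhdsChar X x

/-- The cellularity of a space: the supremum of cardinalities of pairwise disjoint
families of nonempty open subsets. -/
noncomputable def cellularity (X : Type u) [TopologicalSpace X] : Cardinal.{u} :=
  sSup { c | ∃ 𝒰 : Set (Set X), Cardinal.mk 𝒰 = c ∧ (∀ U ∈ 𝒰, IsOpen U ∧ U.Nonempty) ∧
      𝒰.PairwiseDisjoint id }

/-- The density of a space: the least cardinality of a dense subset. -/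
noncomputable def density (X : Type u) [TopologicalSpace X] : Cardinal.{u} :=
  sInf { c | ∃ D : Set X, Cardinal.mk D = c ∧ Dense D }

/-- The weight of a space: the least cardinality of a base for the topology. -/
noncomputable def weight (X : Type u) [TopologicalSpace X] : Cardinal.{u} :=
  sInf { c | ∃ B : Set (Set X), Cardinal.mk B = c ∧ TopologicalSpace.IsTopologicalBasis B }

/-- A surjective map is irreducible if no proper closed subset maps onto the codomain. -/
def IsIrreducibleMap {K : Type*} {X : Type*} [TopologicalSpace K] [TopologicalSpace X]
    (f : K → X) : Prop :=
  Function.Surjective f ∧ ∀ A : Set K, IsClosed A → A ≠ univ → f '' A ≠ univ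

/-- `C` is an order component of `A`: a maximal convex subset of `A`. -/
def IsOrderComponent {K : Type*} [LinearOrder K] (A C : Set K) : Prop :=
  C ⊆ A ∧ C.OrdConnected ∧ ∀ C' : Set K, C ⊆ C' → C' ⊆ A → C'.OrdConnected → C' = C

/-- A map from a linearly ordered set is order-light if every order component of every
fiber is a singleton. -/
def OrderLight {K : Type*} {X : Type*} [LinearOrder K] (f : K → X) : Prop :=
  ∀ x : X, ∀ C : Set K, IsOrderComponent (f ⁻¹' {x}) C → ∃ k, C = {k}

/-- The countable chain condition: every pairwise disjoint family of nonempty open sets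
is countable. -/
def CCC (X : Type*) [TopologicalSpace X] : Prop :=
  ∀ 𝒰 : Set (Set X), (∀ U ∈ 𝒰, IsOpen U ∧ U.Nonempty) → 𝒰.PairwiseDisjoint id → 𝒰.Countable

/-- A space is non-archimedean if it has a base any two members of which are either
disjoint or comparable by inclusion. -/
def NonArchimedean (X : Type*) [TopologicalSpace X] : Prop :=
  ∃ B : Set (Set X), TopologicalSpace.IsTopologicalBasis B ∧
    ∀ U ∈ B, ∀ V ∈ B, Disjoint U V ∨ U ⊆ V ∨ V ⊆ U

/-- A space is perfectly normal if it is normal and every closed set is a Gδ-set. -/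
def PerfNormal (X : Type*) [TopologicalSpace X] : Prop :=
  NormalSpace X ∧ ∀ A : Set X, IsClosed A → IsGδ A

/-- `X` is a continuous image of some compact linearly ordered topological space
(a linearly ordered set equipped with its order topology). -/
def ContinuousImageOfCompactLOTS (X : Type u) [TopologicalSpace X] : Prop :=
  ∃ (K : Type u) (lo : LinearOrder K) (tK : TopologicalSpace K),
    letI := lo; letI := tK;
    OrderTopology K ∧ CompactSpace K ∧ ∃ f : K → X, Continuous f ∧ Function.Surjective f

/-- A closed set `A` is a strong T-set: the boundary of each connected component of the
complement consists of exactly two points, and each such component is homeomorphic to the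
open unit interval `(0,1)`. -/
def IsStrongTSet {Y : Type*} [TopologicalSpace Y] (A : Set Y) : Prop :=
  IsClosed A ∧ ∀ x ∈ Aᶜ,
    (∃ a b : Y, a ≠ b ∧ frontier (connectedComponentIn Aᶜ x) = {a, b}) ∧
    Nonempty (↥(connectedComponentIn Aᶜ x) ≃ₜ ↥(Ioo (0:ℝ) 1))

/-- Souslin's Hypothesis: every ccc LOTS is separable. -/
def SouslinHypothesis : Prop :=
  ∀ (L : Type u) (lo : LinearOrder L) (tL : TopologicalSpace L),
    letI := lo; letI := tL;
    OrderTopology L → CCC L → TopologicalSpace.SeparableSpace L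

private lemma ordConnectedComponent_mono' {K : Type*} [LinearOrder K] {s t : Set K} (k : K)
    (h : s ⊆ t) : ordConnectedComponent s k ⊆ ordConnectedComponent t k :=
  fun _ hy => Set.mem_ordConnectedComponent.2 ((Set.mem_ordConnectedComponent.1 hy).trans h)

private lemma isOrderComponent_ordConnectedComponent {K : Type*} [LinearOrder K] {A : Set K}
    {k : K} (hk : k ∈ A) : IsOrderComponent A (ordConnectedComponent A k) := by
  refine ⟨Set.ordConnectedComponent_subset, inferInstance, fun C' hsub hsubA hC' => ?_⟩
  have hkC' : k ∈ C' := hsub (Set.self_mem_ordConnectedComponent.2 hk)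
  exact subset_antisymm (Set.subset_ordConnectedComponent hkC' hsubA) hsub

section Aux

variable {K : Type u} {X : Type u} [LinearOrder K] [TopologicalSpace K]
    [OrderTopology K] [CompactSpace K] [TopologicalSpace X] [T2Space X]
    {f : K → X}

private lemma icc_subset_fiber_false (hlight : OrderLight f) {k a : K} (hak : a < k)
    (hfib : Icc a k ⊆ f ⁻¹' {f k}) : False := by
  have hkf : k ∈ f ⁻¹' {f k} := rfl
  obtain ⟨k', hk'⟩ := hlight (f k) _ (isOrderComponent_ordConnectedComponent hkf)
  have hkmem : k ∈ ordConnectedComponent (f ⁻¹' {f k}) k :=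
    Set.self_mem_ordConnectedComponent.2 hkf
  have hamem : a ∈ ordConnectedComponent (f ⁻¹' {f k}) k := by
    rw [Set.mem_ordConnectedComponent, uIcc_of_ge hak.le]
    exact hfib
  rw [hk'] at hkmem hamem
  exact absurd (hamem.trans hkmem.symm) hak.ne

private lemma icc_subset_fiber_false' (hlight : OrderLight f) {k b : K} (hkb : k < b)
    (hfib : Icc k b ⊆ f ⁻¹' {f k}) : False := by
  have hkf : k ∈ f ⁻¹' {f k} := rfl
  obtain ⟨k', hk'⟩ := hlight (f k) _ (isOrderComponent_ordConnectedComponent hkf)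
  have hkmem : k ∈ ordConnectedComponent (f ⁻¹' {f k}) k :=
    Set.self_mem_ordConnectedComponent.2 hkf
  have hbmem : b ∈ ordConnectedComponent (f ⁻¹' {f k}) k := by
    rw [Set.mem_ordConnectedComponent, uIcc_of_le hkb.le]
    exact hfib
  rw [hk'] at hkmem hbmem
  exact absurd (hkmem.trans hbmem.symm) hkb.ne

private lemma left_case (hf : Continuous f) (hlight : OrderLight f) {k : K} {W : Set K} (hW : W ∈ 𝓝 k)
    (H : ∀ V ∈ 𝓝 (f k), ∃ p, p ∈ ordConnectedComponent (f ⁻¹' V) k ∧ p < k ∧ p ∉ W) :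
    False := by
  set T : Set K := {p | p < k ∧ p ∉ W} with hT
  obtain ⟨p₀, -, hp₀k, hp₀W⟩ := H univ Filter.univ_mem
  have hTne : (closure T).Nonempty := ⟨p₀, subset_closure ⟨hp₀k, hp₀W⟩⟩
  obtain ⟨a, haT, haub⟩ :=
    (isClosed_closure.isCompact (s := closure T)).exists_isGreatest hTne
  -- `a ≤ k`
  have hak' : a ≤ k := by
    have : closure T ⊆ Iic k := closure_minimal (fun p hp => hp.1.le) isClosed_Iic
    exact this haT
  -- `a ≠ k`
  have hank : a ≠ k := by
    intro h
    have h1 : closure T ⊆ (interior W)ᶜ := by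
      rw [← closure_compl]
      exact closure_mono fun p hp => hp.2
    exact h1 haT (h ▸ mem_interior_iff_mem_nhds.2 hW)
  have hak : a < k := lt_of_le_of_ne hak' hank
  -- every point of `Icc a k` is mapped to `f k`
  have key : Icc a k ⊆ f ⁻¹' {f k} := by
    intro q hq
    have hall : ∀ V ∈ 𝓝 (f k), f q ∈ V := by
      intro V hV
      obtain ⟨p, hpC, hpk, hpW⟩ := H V hV
      have hpa : p ≤ a := haub (subset_closure ⟨hpk, hpW⟩)
      have hkC : k ∈ ordConnectedComponent (f ⁻¹' V) k :=
        Set.self_mem_ordConnectedComponent.2 (mem_of_mem_nhds (hf.continuousAt hV))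
      have : Icc p k ⊆ ordConnectedComponent (f ⁻¹' V) k := by
        have := (inferInstance : (ordConnectedComponent (f ⁻¹' V) k).OrdConnected)
        exact this.out hpC hkC
      have hq' : q ∈ f ⁻¹' V :=
        Set.ordConnectedComponent_subset (this ⟨hpa.trans hq.1, hq.2⟩)
      exact hq'
    by_contra hne
    exact hall {f q}ᶜ (isOpen_compl_singleton.mem_nhds (Ne.symm hne)) rfl
  exact icc_subset_fiber_false hlight hak key

private lemma right_case (hf : Continuous f) (hlight : OrderLight f) {k : K} {W : Set K} (hW : W ∈ 𝓝 k)
    (H : ∀ V ∈ 𝓝 (f k), ∃ p, p ∈ ordConnectedComponent (f ⁻¹' V) k ∧ k < p ∧ p ∉ W) :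
    False := by
  set T : Set K := {p | k < p ∧ p ∉ W} with hT
  obtain ⟨p₀, -, hp₀k, hp₀W⟩ := H univ Filter.univ_mem
  have hTne : (closure T).Nonempty := ⟨p₀, subset_closure ⟨hp₀k, hp₀W⟩⟩
  obtain ⟨b, hbT, hblb⟩ :=
    (isClosed_closure.isCompact (s := closure T)).exists_isLeast hTne
  have hkb' : k ≤ b := by
    have : closure T ⊆ Ici k := closure_minimal (fun p hp => hp.1.le) isClosed_Ici
    exact this hbT
  have hbnk : b ≠ k := by
    intro h
    have h1 : closure T ⊆ (interior W)ᶜ := by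
      rw [← closure_compl]
      exact closure_mono fun p hp => hp.2
    exact h1 hbT (h ▸ mem_interior_iff_mem_nhds.2 hW)
  have hkb : k < b := lt_of_le_of_ne hkb' (Ne.symm hbnk)
  have key : Icc k b ⊆ f ⁻¹' {f k} := by
    intro q hq
    have hall : ∀ V ∈ 𝓝 (f k), f q ∈ V := by
      intro V hV
      obtain ⟨p, hpC, hpk, hpW⟩ := H V hV
      have hbp : b ≤ p := hblb (subset_closure ⟨hpk, hpW⟩)
      have hkC : k ∈ ordConnectedComponent (f ⁻¹' V) k :=
        Set.self_mem_ordConnectedComponent.2 (mem_of_mem_nhds (hf.continuousAt hV))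
      have : Icc k p ⊆ ordConnectedComponent (f ⁻¹' V) k := by
        have := (inferInstance : (ordConnectedComponent (f ⁻¹' V) k).OrdConnected)
        exact this.out hkC hpC
      have hq' : q ∈ f ⁻¹' V :=
        Set.ordConnectedComponent_subset (this ⟨hq.1, hq.2.trans hbp⟩)
      exact hq'
    by_contra hne
    exact hall {f q}ᶜ (isOpen_compl_singleton.mem_nhds (Ne.symm hne)) rfl
  exact icc_subset_fiber_false' hlight hkb key

private lemma main_claim (hf : Continuous f) (hlight : OrderLight f) (k : K) {W : Set K}
    (hW : W ∈ 𝓝 k) : ∃ V ∈ 𝓝 (f k), ordConnectedComponent (f ⁻¹' V) k ⊆ W := by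
  by_contra hcon
  push_neg at hcon
  have hkW : k ∈ W := mem_of_mem_nhds hW
  have H : ∀ V ∈ 𝓝 (f k), ∃ p, p ∈ ordConnectedComponent (f ⁻¹' V) k ∧ p ∉ W := by
    intro V hV
    obtain ⟨p, hp, hpW⟩ := Set.not_subset.1 (hcon V hV)
    exact ⟨p, hp, hpW⟩
  by_cases hL : ∀ V ∈ 𝓝 (f k), ∃ p, p ∈ ordConnectedComponent (f ⁻¹' V) k ∧ p < k ∧ p ∉ W
  · exact left_case hf hlight hW hL
  · push_neg at hL
    obtain ⟨V₁, hV₁, hV₁p⟩ := hL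
    refine right_case hf hlight hW (fun V hV => ?_)
    obtain ⟨p, hpC, hpW⟩ := H (V ∩ V₁) (Filter.inter_mem hV hV₁)
    have hpC' : p ∈ ordConnectedComponent (f ⁻¹' V) k ∩
        ordConnectedComponent (f ⁻¹' V₁) k := by
      rw [← Set.ordConnectedComponent_inter, ← Set.preimage_inter]
      exact hpC
    rcases lt_trichotomy p k with hlt | heq | hgt
    · exact absurd hpW (not_not.2 (hV₁p p hpC'.2 hlt))
    · exact absurd (heq ▸ hkW) hpW
    · exact ⟨p, hpC'.1, hgt, hpW⟩

end Aux

theorem orderLight_char_le (K : Type u) (X : Type u) [LinearOrder K] [TopologicalSpace K]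
    [OrderTopology K] [CompactSpace K] [TopologicalSpace X] [T2Space X]
    (f : K → X) (hf : Continuous f) (hsurj : Function.Surjective f)
    (hlight : OrderLight f) :
    ∀ k : K, nhdsChar K k ≤ nhdsChar X (f k) := by
  intro k
  have hSne : { c | ∃ B : Set (Set X), Cardinal.mk B = c ∧ (∀ U ∈ B, U ∈ nhds (f k)) ∧
      ∀ V ∈ nhds (f k), ∃ U ∈ B, U ⊆ V }.Nonempty := by
    exact ⟨_, {V | V ∈ 𝓝 (f k)}, rfl, fun U hU => hU, fun V hV => ⟨V, hV, subset_rfl⟩⟩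
  obtain ⟨B, hBmk, hBnhds, hBbase⟩ := csInf_mem hSne
  set B' : Set (Set K) := (fun V => ordConnectedComponent (f ⁻¹' V) k) '' B with hB'
  have hB'mem : Cardinal.mk B' ∈ { c | ∃ B : Set (Set K), Cardinal.mk B = c ∧
      (∀ U ∈ B, U ∈ nhds k) ∧ ∀ V ∈ nhds k, ∃ U ∈ B, U ⊆ V } := by
    refine ⟨B', rfl, ?_, ?_⟩
    · rintro U ⟨V, hV, rfl⟩
      exact Set.ordConnectedComponent_mem_nhds.2 (hf.continuousAt (hBnhds V hV))
    · intro W hW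
      obtain ⟨V, hV, hVW⟩ := main_claim hf hlight k hW
      obtain ⟨V', hV'B, hV'V⟩ := hBbase V hV
      exact ⟨ordConnectedComponent (f ⁻¹' V') k, ⟨V', hV'B, rfl⟩,
        (ordConnectedComponent_mono' k (Set.preimage_mono hV'V)).trans hVW⟩
  calc nhdsChar K k ≤ Cardinal.mk B' := csInf_le' hB'mem
    _ ≤ Cardinal.mk B := Cardinal.mk_image_le
    _ = nhdsChar X (f k) := hBmk
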